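/- Lipschitz continuity of the martingale differences in the quantile level (inequality (eq:xitautaupri)): for every 1 ≤ i ≤ p, every k ≥ 1 and all τ, τ' ∈ [τ0, τ1], almost surely |ξ_{i,k+1}(τ) − ξ_{i,k+1}(τ')| ≤ [1 + (2a)^{−1} (1−β)^{−1} k] |τ − τ'|. -/

import Mathlib

open MeasureTheory ProbabilityTheory Real

/-- The piecewise-linear smoothing of the indicator function. -/
noncomputable def gfun (x : ℝ) : ℝ :=
  if 1 ≤ x then 1 else if -1 ≤ x then (x + 1) / 2 else 0

/-- Rescaled smoothing function `g_h(x) = g(x/h)`. -/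
noncomputable def gsm (h x : ℝ) : ℝ := gfun (x / h)

/-- Learning rate `γ_k = c_γ k^{-β}`. -/
noncomputable def gam (cγ β : ℝ) (k : ℕ) : ℝ := cγ * (k : ℝ) ^ (-β)

/-- The σ-field generated by `X_1, …, X_k`. -/
def sigmaUpTo {Ω : Type} (X : ℕ → Ω → ℝ) (k : ℕ) : MeasurableSpace Ω :=
  ⨆ j ∈ Finset.Icc 1 k, MeasurableSpace.comap (X j) inferInstance

lemma gfun_nonneg (x : ℝ) : 0 ≤ gfun x := by unfold gfun; split_ifs <;> linarith

lemma gfun_le_one (x : ℝ) : gfun x ≤ 1 := by unfold gfun; split_ifs <;> linarith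

lemma gfun_mono_lip {x x' : ℝ} (h : x' ≤ x) :
    0 ≤ gfun x - gfun x' ∧ gfun x - gfun x' ≤ (x - x') / 2 := by
  unfold gfun; constructor <;> [skip; skip] <;> split_ifs <;> linarith

lemma gfun_measurable : Measurable gfun := by
  unfold gfun
  exact Measurable.ite measurableSet_Ici measurable_const
    (Measurable.ite measurableSet_Ici ((measurable_id.add_const 1).div_const 2) measurable_const)

lemma gsm_mono_lip {h x x' : ℝ} (hh : 0 < h) (hx : x' ≤ x) :
    0 ≤ gsm h x - gsm h x' ∧ gsm h x - gsm h x' ≤ (x - x') / (2 * h) := by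
  have h1 : x' / h ≤ x / h := by gcongr
  obtain ⟨h2, h3⟩ := gfun_mono_lip h1
  refine ⟨h2, ?_⟩
  have heq : (x / h - x' / h) / 2 = (x - x') / (2 * h) := by
    rw [← sub_div, div_div, mul_comm]
  unfold gsm; linarith [heq ▸ h3]

lemma sum_rpow_le {β : ℝ} (hβ0 : 0 < β) (hβ2 : β < 1) (m : ℕ) :
    ∑ j ∈ Finset.Icc 1 m, (j : ℝ) ^ (-β) ≤ (1 - β)⁻¹ * (m : ℝ) ^ (1 - β) := by
  induction m with
  | zero => simp [Real.zero_rpow (by linarith : (1:ℝ) - β ≠ 0)]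
  | succ m ih =>
    rw [Finset.sum_Icc_succ_top (Nat.one_le_iff_ne_zero.mpr (Nat.succ_ne_zero m))]
    have hM : (0:ℝ) < (m:ℝ) + 1 := by positivity
    have hp0 : (0:ℝ) ≤ 1 - β := by linarith
    have hp1 : (1:ℝ) - β ≤ 1 := by linarith
    have hs : (-1 : ℝ) ≤ -1 / ((m:ℝ)+1) := by
      rw [neg_div, neg_le_neg_iff, div_le_one hM]
      linarith
    have hbern := rpow_one_add_le_one_add_mul_self hs hp0 hp1
    have h1s : (1:ℝ) + -1/((m:ℝ)+1) = (m:ℝ)/((m:ℝ)+1) := by field_simp; ring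
    rw [h1s] at hbern
    have hdvr : ((m:ℝ)/((m:ℝ)+1)) ^ (1-β) = (m:ℝ)^(1-β) / ((m:ℝ)+1)^(1-β) :=
      Real.div_rpow (Nat.cast_nonneg m) hM.le _
    rw [hdvr] at hbern
    have hMp : (0:ℝ) < ((m:ℝ)+1) ^ (1-β) := Real.rpow_pos_of_pos hM _
    have key : (m:ℝ)^(1-β) ≤ ((m:ℝ)+1)^(1-β) - (1-β) * ((m:ℝ)+1)^(1-β) / ((m:ℝ)+1) := by
      have := mul_le_mul_of_nonneg_right hbern hMp.le
      rw [div_mul_cancel₀ _ (ne_of_gt hMp)] at this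
      have expand : (1 + (1-β) * (-1/((m:ℝ)+1))) * ((m:ℝ)+1)^(1-β)
          = ((m:ℝ)+1)^(1-β) - (1-β) * ((m:ℝ)+1)^(1-β) / ((m:ℝ)+1) := by
        field_simp; ring
      linarith [expand ▸ this]
    have hpow : ((m:ℝ)+1)^(1-β) / ((m:ℝ)+1) = ((m:ℝ)+1) ^ (-β) := by
      rw [← Real.rpow_sub_one (ne_of_gt hM)]
      norm_num
    have key2 : (1-β) * ((m:ℝ)+1)^(-β) ≤ ((m:ℝ)+1)^(1-β) - (m:ℝ)^(1-β) := by
      rw [← hpow]; linarith [key, mul_div_assoc (1-β) (((m:ℝ)+1)^(1-β)) ((m:ℝ)+1)]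
    have hβinv : (0:ℝ) < (1-β)⁻¹ := inv_pos.mpr (by linarith)
    push_cast
    have := mul_le_mul_of_nonneg_left key2 hβinv.le
    rw [← mul_assoc, inv_mul_cancel₀ (by linarith : (1:ℝ)-β ≠ 0), one_mul] at this
    linarith [ih, this]

lemma gam_pos {cγ β : ℝ} (hcγ : 0 < cγ) {n : ℕ} (hn : 1 ≤ n) : 0 < gam cγ β n :=
  mul_pos hcγ (Real.rpow_pos_of_pos (by exact_mod_cast Nat.lt_of_lt_of_le Nat.zero_lt_one hn) _)

lemma gam_nonneg {cγ β : ℝ} (hcγ : 0 < cγ) (n : ℕ) : 0 ≤ gam cγ β n :=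
  mul_nonneg hcγ.le (Real.rpow_nonneg (Nat.cast_nonneg n) _)

set_option maxHeartbeats 1000000 in
theorem smoothed_sgd_xi_lipschitz_in_tau_aux
    (τ0 τ1 cγ β a : ℝ)
    (hcγ : 0 < cγ) (hβ1 : 1 / 2 < β) (hβ2 : β < 1) (ha : 1 / 2 < a)
    (Ω : Type) [mΩ : MeasurableSpace Ω] (μ : Measure Ω) [IsProbabilityMeasure μ]
    (X : ℕ → ℕ → Ω → ℝ) (y : ℕ → ℝ) (Y : ℕ → ℕ → ℝ → Ω → ℝ)
    (hXmeas : ∀ i k, Measurable (X i k))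
    (hY1 : ∀ i τ ω, Y i 1 τ ω = y i)
    (hYrec : ∀ i k τ ω, 1 ≤ k → Y i (k + 1) τ ω =
      Y i k τ ω + gam cγ β k * (τ - gsm (a * gam cγ β k) (Y i k τ ω - X i (k + 1) ω)))
    (i k : ℕ) (hk : 1 ≤ k)
    (τ τ' : ℝ) (hτle : τ' ≤ τ) :
    ∀ᵐ ω ∂μ,
      |((τ - gsm (a * gam cγ β k) (Y i k τ ω - X i (k + 1) ω)) -
          (μ[fun ω' => τ - gsm (a * gam cγ β k) (Y i k τ ω' - X i (k + 1) ω') |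
              sigmaUpTo (X i) k]) ω) -
        ((τ' - gsm (a * gam cγ β k) (Y i k τ' ω - X i (k + 1) ω)) -
          (μ[fun ω' => τ' - gsm (a * gam cγ β k) (Y i k τ' ω' - X i (k + 1) ω') |
              sigmaUpTo (X i) k]) ω)| ≤
      (1 + (2 * a)⁻¹ * (1 - β)⁻¹ * (k : ℝ)) * |τ - τ'| := by
  have ha0 : (0:ℝ) < a := by linarith
  have hβ0 : (0:ℝ) < β := by linarith
  -- measurability of the iterates
  have hYm : ∀ n, 1 ≤ n → ∀ σ : ℝ, Measurable (fun ω => Y i n σ ω) := by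
    intro n hn
    induction n, hn using Nat.le_induction with
    | base => intro σ; simp only [hY1]; exact measurable_const
    | succ n hn ih =>
      intro σ
      have he : (fun ω => Y i (n+1) σ ω) = fun ω =>
          Y i n σ ω + gam cγ β n * (σ - gsm (a * gam cγ β n) (Y i n σ ω - X i (n+1) ω)) :=
        funext fun ω => hYrec i n σ ω hn
      rw [he]
      simp only [gsm]
      exact (ih σ).add (measurable_const.mul (measurable_const.sub
        (gfun_measurable.comp (((ih σ).sub (hXmeas i (n+1))).div_const _))))
  -- monotonicity/Lipschitz in τ of the iterates
  have hYd : ∀ n, 1 ≤ n → ∀ ω, 0 ≤ Y i n τ ω - Y i n τ' ω ∧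
      Y i n τ ω - Y i n τ' ω ≤ (τ - τ') * ∑ j ∈ Finset.Icc 1 (n-1), gam cγ β j := by
    intro n hn
    induction n, hn using Nat.le_induction with
    | base =>
      intro ω
      simp only [hY1, sub_self, le_refl, true_and]
      exact mul_nonneg (by linarith) (Finset.sum_nonneg fun j _ => gam_nonneg hcγ j)
    | succ n hn ih =>
      intro ω
      obtain ⟨hd0, hd1⟩ := ih ω
      have hγpos : 0 < gam cγ β n := gam_pos hcγ hn
      set γ := gam cγ β n with hγdef
      have hhpos : 0 < a * γ := mul_pos ha0 hγpos
      have hx : Y i n τ' ω - X i (n+1) ω ≤ Y i n τ ω - X i (n+1) ω := by linarith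
      obtain ⟨hg0, hg1⟩ := gsm_mono_lip hhpos hx
      set A := gsm (a*γ) (Y i n τ ω - X i (n+1) ω) with hA
      set B := gsm (a*γ) (Y i n τ' ω - X i (n+1) ω) with hB
      have hsimp : Y i n τ ω - X i (n+1) ω - (Y i n τ' ω - X i (n+1) ω)
          = Y i n τ ω - Y i n τ' ω := by ring
      rw [hsimp] at hg1
      have hkey : γ * (A - B) ≤ (Y i n τ ω - Y i n τ' ω) / (2*a) := by
        have hmul := mul_le_mul_of_nonneg_left hg1 hγpos.le
        have heq : γ * ((Y i n τ ω - Y i n τ' ω) / (2*(a*γ)))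
            = (Y i n τ ω - Y i n τ' ω)/(2*a) := by
          field_simp
        linarith [heq ▸ hmul]
      have ha2 : (Y i n τ ω - Y i n τ' ω) / (2*a) ≤ Y i n τ ω - Y i n τ' ω := by
        rw [div_le_iff₀ (by linarith : (0:ℝ) < 2*a)]
        nlinarith
      have hrecτ := hYrec i n τ ω hn
      have hrecτ' := hYrec i n τ' ω hn
      have hγτ : 0 ≤ γ * (τ - τ') := mul_nonneg hγpos.le (by linarith)
      have hsum : ∑ j ∈ Finset.Icc 1 ((n+1)-1), gam cγ β j
          = (∑ j ∈ Finset.Icc 1 (n-1), gam cγ β j) + γ := by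
        rw [Nat.add_sub_cancel]
        have h' : n - 1 + 1 = n := by omega
        calc ∑ j ∈ Finset.Icc 1 n, gam cγ β j
            = ∑ j ∈ Finset.Icc 1 (n-1+1), gam cγ β j := by rw [h']
          _ = (∑ j ∈ Finset.Icc 1 (n-1), gam cγ β j) + gam cγ β (n-1+1) :=
              Finset.sum_Icc_succ_top (Nat.le_add_left 1 (n-1)) _
          _ = (∑ j ∈ Finset.Icc 1 (n-1), gam cγ β j) + γ := by rw [h', hγdef]
      constructor
      · rw [hrecτ, hrecτ', ← hA, ← hB, ← hγdef]
        nlinarith [hkey, ha2, hd0, hγτ]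
      · rw [hrecτ, hrecτ', ← hA, ← hB, ← hγdef, hsum]
        nlinarith [hd1, mul_nonneg hγpos.le hg0]
  -- bound on the sum of step sizes
  have hkpos : (0:ℝ) < (k:ℝ) := by exact_mod_cast hk
  set t := (k:ℝ) ^ (-β) with htdef
  have htpos : 0 < t := Real.rpow_pos_of_pos hkpos _
  have hS : (∑ j ∈ Finset.Icc 1 (k-1), gam cγ β j) ≤ cγ * (1-β)⁻¹ * (k:ℝ) * t := by
    have h1 : (∑ j ∈ Finset.Icc 1 (k-1), gam cγ β j)
        = cγ * ∑ j ∈ Finset.Icc 1 (k-1), (j:ℝ) ^ (-β) := by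
      rw [Finset.mul_sum]; rfl
    have h2 := sum_rpow_le hβ0 hβ2 (k-1)
    have h3 : ((k-1:ℕ):ℝ) ^ (1-β) ≤ (k:ℝ) ^ (1-β) :=
      Real.rpow_le_rpow (Nat.cast_nonneg _) (by exact_mod_cast Nat.sub_le k 1) (by linarith)
    have h4 : (k:ℝ) ^ (1-β) = (k:ℝ) * t := by
      rw [htdef, show (1:ℝ)-β = 1 + (-β) by ring, Real.rpow_add hkpos, Real.rpow_one]
    have hβinv : (0:ℝ) ≤ (1-β)⁻¹ := le_of_lt (inv_pos.mpr (by linarith))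
    rw [h1]
    calc cγ * ∑ j ∈ Finset.Icc 1 (k-1), (j:ℝ) ^ (-β)
        ≤ cγ * ((1-β)⁻¹ * ((k-1:ℕ):ℝ) ^ (1-β)) :=
          mul_le_mul_of_nonneg_left h2 hcγ.le
      _ ≤ cγ * ((1-β)⁻¹ * (k:ℝ) ^ (1-β)) := by
          exact mul_le_mul_of_nonneg_left (mul_le_mul_of_nonneg_left h3 hβinv) hcγ.le
      _ = cγ * (1-β)⁻¹ * (k:ℝ) * t := by rw [h4]; ring
  -- the difference of the smoothed losses
  have hγkpos : 0 < gam cγ β k := gam_pos hcγ hk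
  have hγk : gam cγ β k = cγ * t := rfl
  have hhk : 0 < a * gam cγ β k := mul_pos ha0 hγkpos
  set M : ℝ := (2*a)⁻¹ * (1-β)⁻¹ * (k:ℝ) * (τ - τ') with hM
  set G : Ω → ℝ := fun ω => gsm (a * gam cγ β k) (Y i k τ ω - X i (k+1) ω)
      - gsm (a * gam cγ β k) (Y i k τ' ω - X i (k+1) ω) with hGdef
  have hG0 : ∀ ω, 0 ≤ G ω := by
    intro ω
    exact (gsm_mono_lip hhk (by linarith [(hYd k hk ω).1])).1
  have hGM : ∀ ω, G ω ≤ M := by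
    intro ω
    obtain ⟨hd0, hd1⟩ := hYd k hk ω
    have hlip := (gsm_mono_lip hhk (by linarith : Y i k τ' ω - X i (k+1) ω ≤ Y i k τ ω - X i (k+1) ω)).2
    have hsimp : Y i k τ ω - X i (k+1) ω - (Y i k τ' ω - X i (k+1) ω)
        = Y i k τ ω - Y i k τ' ω := by ring
    rw [hsimp] at hlip
    have hstep1 : G ω ≤ (Y i k τ ω - Y i k τ' ω) / (2 * (a * gam cγ β k)) := hlip
    have hstep2 : (Y i k τ ω - Y i k τ' ω) / (2 * (a * gam cγ β k))
        ≤ ((τ - τ') * (cγ * (1-β)⁻¹ * (k:ℝ) * t)) / (2 * (a * gam cγ β k)) := by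
      gcongr
      calc Y i k τ ω - Y i k τ' ω ≤ (τ - τ') * ∑ j ∈ Finset.Icc 1 (k-1), gam cγ β j := hd1
        _ ≤ (τ - τ') * (cγ * (1-β)⁻¹ * (k:ℝ) * t) :=
            mul_le_mul_of_nonneg_left hS (by linarith)
    have hane : a ≠ 0 := ne_of_gt ha0
    have hcne : cγ ≠ 0 := ne_of_gt hcγ
    have htne : t ≠ 0 := ne_of_gt htpos
    have hβne : (1:ℝ) - β ≠ 0 := ne_of_gt (by linarith)
    have hstep3 : ((τ - τ') * (cγ * (1-β)⁻¹ * (k:ℝ) * t)) / (2 * (a * gam cγ β k)) = M := by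
      rw [hγk, hM]
      field_simp
    exact hstep1.trans (hstep2.trans_eq hstep3)
  have hMnn : 0 ≤ M :=
    mul_nonneg (mul_nonneg (mul_nonneg (inv_nonneg.mpr (by linarith))
      (inv_nonneg.mpr (by linarith))) hkpos.le) (by linarith)
  -- conditional expectation manipulations
  have hm : sigmaUpTo (X i) k ≤ mΩ := by
    refine iSup₂_le fun j _ => ?_
    exact (hXmeas i j).comap_le
  have hGsmMeas : ∀ σ : ℝ, Measurable
      (fun ω => gsm (a * gam cγ β k) (Y i k σ ω - X i (k+1) ω)) := by
    intro σ
    simp only [gsm]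
    exact gfun_measurable.comp (((hYm k hk σ).sub (hXmeas i (k+1))).div_const _)
  have hZint : ∀ σ : ℝ, Integrable
      (fun ω => σ - gsm (a * gam cγ β k) (Y i k σ ω - X i (k+1) ω)) μ := by
    intro σ
    refine (integrable_const (|σ| + 1)).mono'
      ((measurable_const.sub (hGsmMeas σ)).aestronglyMeasurable) ?_
    filter_upwards with ω
    rw [Real.norm_eq_abs]
    have h1 := gfun_nonneg ((Y i k σ ω - X i (k+1) ω) / (a * gam cγ β k))
    have h2 := gfun_le_one ((Y i k σ ω - X i (k+1) ω) / (a * gam cγ β k))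
    have := abs_nonneg σ
    rw [abs_le]
    unfold gsm
    constructor <;> [nlinarith [neg_abs_le σ]; nlinarith [le_abs_self σ]]
  have hGint : Integrable G μ := by
    have hGeq : G = fun ω => (τ - τ') -
        ((fun ω => τ - gsm (a * gam cγ β k) (Y i k τ ω - X i (k+1) ω)) ω -
         (fun ω => τ' - gsm (a * gam cγ β k) (Y i k τ' ω - X i (k+1) ω)) ω) := by
      funext ω; simp only [hGdef]; ring
    rw [hGeq]
    exact (integrable_const _).sub ((hZint τ).sub (hZint τ'))
  set Zτ : Ω → ℝ := fun ω' => τ - gsm (a * gam cγ β k) (Y i k τ ω' - X i (k+1) ω') with hZτ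
  set Zτ' : Ω → ℝ := fun ω' => τ' - gsm (a * gam cγ β k) (Y i k τ' ω' - X i (k+1) ω') with hZτ'
  have e1 : μ[fun ω => Zτ ω - Zτ' ω|sigmaUpTo (X i) k] =ᵐ[μ] fun ω => (μ[Zτ|sigmaUpTo (X i) k]) ω - (μ[Zτ'|sigmaUpTo (X i) k]) ω := by
    have := condExp_sub (m := sigmaUpTo (X i) k) (μ := μ) (hZint τ) (hZint τ')
    exact this
  have e2 : (fun ω => Zτ ω - Zτ' ω) = fun ω => (τ - τ') - G ω := by
    funext ω; simp only [hZτ, hZτ', hGdef]; ring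
  have e3 : μ[fun ω => (τ - τ') - G ω|sigmaUpTo (X i) k] =ᵐ[μ] fun ω => (τ - τ') - (μ[G|sigmaUpTo (X i) k]) ω := by
    have h := condExp_sub (m := sigmaUpTo (X i) k) (μ := μ) (integrable_const (τ - τ')) hGint
    have hc : μ[fun _ : Ω => (τ - τ')|sigmaUpTo (X i) k] = fun _ => (τ - τ') := condExp_const hm _
    filter_upwards [h] with ω hω
    calc (μ[fun ω => (τ - τ') - G ω|sigmaUpTo (X i) k]) ω
        = (μ[(fun _ : Ω => (τ - τ')) - G|sigmaUpTo (X i) k]) ω := by rfl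
      _ = (μ[fun _ : Ω => (τ - τ')|sigmaUpTo (X i) k]) ω - (μ[G|sigmaUpTo (X i) k]) ω := hω
      _ = (τ - τ') - (μ[G|sigmaUpTo (X i) k]) ω := by rw [hc]
  have e4 : 0 ≤ᵐ[μ] μ[G|sigmaUpTo (X i) k] := condExp_nonneg (ae_of_all _ hG0)
  have e5 : μ[G|sigmaUpTo (X i) k] ≤ᵐ[μ] fun _ => M := by
    have h := condExp_mono (m := sigmaUpTo (X i) k) hGint (integrable_const M) (ae_of_all _ hGM)
    rwa [condExp_const hm] at h
  have e6 : (fun ω => (μ[Zτ|sigmaUpTo (X i) k]) ω - (μ[Zτ'|sigmaUpTo (X i) k]) ω) =ᵐ[μ] fun ω => (τ - τ') - (μ[G|sigmaUpTo (X i) k]) ω :=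
    e1.symm.trans (e2 ▸ e3)
  filter_upwards [e6, e4, e5] with ω h6 h4 h5
  have h2 := congrFun e2 ω
  have hval : (Zτ ω - (μ[Zτ|sigmaUpTo (X i) k]) ω) - (Zτ' ω - (μ[Zτ'|sigmaUpTo (X i) k]) ω) = (μ[G|sigmaUpTo (X i) k]) ω - G ω := by
    linarith [h2, h6]
  rw [hval]
  have hG0ω := hG0 ω
  have hGMω := hGM ω
  have habs : |τ - τ'| = τ - τ' := abs_of_nonneg (by linarith)
  clear_value t M G Zτ Zτ'
  rw [habs, abs_le]
  simp only [Pi.zero_apply] at h4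
  rw [hM] at h5 hGMω hMnn
  constructor <;> nlinarith [h4, h5, hG0ω, hGMω, hMnn, hτle]

/-- **Lipschitz continuity of the martingale differences in the quantile level**
(inequality (eq:xitautaupri)): for every `1 ≤ i ≤ p`, every `k ≥ 1` and all
`τ, τ' ∈ [τ0, τ1]`, almost surely
`|ξ_{i,k+1}(τ) − ξ_{i,k+1}(τ')| ≤ [1 + (2a)⁻¹ (1−β)⁻¹ k] |τ − τ'|`, where
`ξ_{i,k+1}(τ) = Z_{i,k+1}(τ) − E(Z_{i,k+1}(τ) | F_{i,k})` and
`Z_{i,k+1}(τ) = τ − g_{aγ_k}(Y_{i,k}(τ) − X_{i,k+1})`. -/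
theorem smoothed_sgd_xi_lipschitz_in_tau
    (τ0 τ1 cγ β a cy : ℝ)
    (hτ0 : 0 < τ0) (hτ01 : τ0 < τ1) (hτ1 : τ1 < 1)
    (hcγ : 0 < cγ) (hβ1 : 1 / 2 < β) (hβ2 : β < 1) (ha : 1 / 2 < a)
    (p : ℕ) (Ω : Type) [MeasurableSpace Ω] (μ : Measure Ω) [IsProbabilityMeasure μ]
    (X : ℕ → ℕ → Ω → ℝ) (y : ℕ → ℝ) (Y : ℕ → ℕ → ℝ → Ω → ℝ)
    (hXmeas : ∀ i k, Measurable (X i k))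
    -- the X_{i,k}, k ≥ 1, are independent and identically distributed
    (hindep : ∀ i, iIndepFun (fun k => X i k) μ)
    (hident : ∀ i k, 1 ≤ k → Measure.map (X i k) μ = Measure.map (X i 1) μ)
    -- SGD iterates with deterministic initial value, `max_i |y_i| ≤ c_y`
    (hy : ∀ i, 1 ≤ i → i ≤ p → |y i| ≤ cy)
    (hY1 : ∀ i τ ω, Y i 1 τ ω = y i)
    (hYrec : ∀ i k τ ω, 1 ≤ k → Y i (k + 1) τ ω =
      Y i k τ ω + gam cγ β k * (τ - gsm (a * gam cγ β k) (Y i k τ ω - X i (k + 1) ω)))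
    (i k : ℕ) (hi1 : 1 ≤ i) (hip : i ≤ p) (hk : 1 ≤ k)
    (τ τ' : ℝ) (hτl : τ0 ≤ τ) (hτu : τ ≤ τ1) (hτ'l : τ0 ≤ τ') (hτ'u : τ' ≤ τ1) :
    ∀ᵐ ω ∂μ,
      |((τ - gsm (a * gam cγ β k) (Y i k τ ω - X i (k + 1) ω)) -
          (μ[fun ω' => τ - gsm (a * gam cγ β k) (Y i k τ ω' - X i (k + 1) ω') |
              sigmaUpTo (X i) k]) ω) -
        ((τ' - gsm (a * gam cγ β k) (Y i k τ' ω - X i (k + 1) ω)) -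
          (μ[fun ω' => τ' - gsm (a * gam cγ β k) (Y i k τ' ω' - X i (k + 1) ω') |
              sigmaUpTo (X i) k]) ω)| ≤
      (1 + (2 * a)⁻¹ * (1 - β)⁻¹ * (k : ℝ)) * |τ - τ'| := by
  rcases le_total τ' τ with h | h
  · exact smoothed_sgd_xi_lipschitz_in_tau_aux τ0 τ1 cγ β a hcγ hβ1 hβ2 ha Ω μ X y Y
      hXmeas hY1 hYrec i k hk τ τ' h
  · have := smoothed_sgd_xi_lipschitz_in_tau_aux τ0 τ1 cγ β a hcγ hβ1 hβ2 ha Ω μ X y Y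
      hXmeas hY1 hYrec i k hk τ' τ h
    filter_upwards [this] with ω hω
    rw [abs_sub_comm, abs_sub_comm τ τ']
    exact hω
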